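/- For an integer n ≥ 2, the limit as s → 1 of (s-1)·ζ₂(n, s) equals ζ(n). -/

import Mathlib

open Filter

/-- The Euler–Zagier double zeta function
`ζ₂(s₁,s₂) = ∑_{0<n₁<n₂} n₁^{-s₁} n₂^{-s₂}` (as a sum over pairs). -/
noncomputable def zeta2 (s₁ s₂ : ℂ) : ℂ :=
  ∑' p : ℕ × ℕ, 1 / (((p.1 + 1 : ℕ) : ℂ) ^ s₁ * ((p.1 + p.2 + 2 : ℕ) : ℂ) ^ s₂)

namespace Zeta2Aux

lemma Pbound {s : ℂ} (hs : 1 ≤ s.re) (m : ℕ) :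
    ‖∑ i ∈ Finset.range m, 1 / ((i + 1 : ℕ) : ℂ) ^ s‖ ≤ 1 + Real.log m := by
  calc ‖∑ i ∈ Finset.range m, 1 / ((i + 1 : ℕ) : ℂ) ^ s‖
      ≤ ∑ i ∈ Finset.range m, ‖1 / ((i + 1 : ℕ) : ℂ) ^ s‖ := norm_sum_le _ _
    _ ≤ ∑ i ∈ Finset.range m, ((i + 1 : ℕ) : ℝ)⁻¹ := by
        refine Finset.sum_le_sum fun i _ => ?_
        rw [norm_div, norm_one, Complex.norm_natCast_cpow_of_pos (Nat.succ_pos i), one_div]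
        refine inv_anti₀ (by positivity) ?_
        calc ((i + 1 : ℕ) : ℝ) = ((i + 1 : ℕ) : ℝ) ^ (1 : ℝ) := (Real.rpow_one _).symm
          _ ≤ ((i + 1 : ℕ) : ℝ) ^ s.re :=
            Real.rpow_le_rpow_of_exponent_le (by exact_mod_cast Nat.succ_le_succ i.zero_le) hs
    _ = ((harmonic m : ℚ) : ℝ) := by rw [harmonic]; push_cast; ring
    _ ≤ 1 + Real.log m := harmonic_le_one_add_log m

noncomputable def D (a : ℕ) : ℝ := (1 + Real.log ((a : ℝ) + 1)) / ((a : ℝ) + 1) ^ (2 : ℝ)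

lemma Dsummable : Summable D := by
  have hs : Summable (fun a : ℕ => 3 * (((a : ℝ) + 1) ^ ((3 : ℝ)/2))⁻¹) := by
    apply Summable.mul_left
    have := (Real.summable_one_div_nat_rpow (p := (3:ℝ)/2)).mpr (by norm_num)
    have h2 := (summable_nat_add_iff 1).mpr this
    simpa [one_div] using h2
  refine Summable.of_nonneg_of_le (fun a => ?_) (fun a => ?_) hs
  · have : (0:ℝ) ≤ Real.log ((a:ℝ)+1) := Real.log_nonneg (by linarith [Nat.cast_nonneg (α := ℝ) a])
    unfold D; positivity
  have h1 : (0:ℝ) < (a : ℝ) + 1 := by positivity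
  have hlog : Real.log ((a : ℝ) + 1) ≤ 2 * Real.sqrt ((a : ℝ) + 1) := by
    have h2 : Real.log ((a:ℝ)+1) = 2 * Real.log (Real.sqrt ((a:ℝ)+1)) := by
      rw [Real.log_sqrt h1.le]; ring
    have h3 : Real.log (Real.sqrt ((a:ℝ)+1)) ≤ Real.sqrt ((a:ℝ)+1) :=
      (Real.log_le_sub_one_of_pos (Real.sqrt_pos.mpr h1)).trans (by linarith)
    linarith [h2, h3]
  have hsq : Real.sqrt ((a:ℝ)+1) = ((a:ℝ)+1) ^ ((1:ℝ)/2) := Real.sqrt_eq_rpow _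
  have h1le : (1:ℝ) ≤ Real.sqrt ((a:ℝ)+1) := by
    have := Real.sqrt_le_sqrt (show (1:ℝ) ≤ (a:ℝ)+1 by linarith [Nat.cast_nonneg (α := ℝ) a])
    rwa [Real.sqrt_one] at this
  have hnum : 1 + Real.log ((a:ℝ)+1) ≤ 3 * ((a:ℝ)+1) ^ ((1:ℝ)/2) := by
    rw [← hsq]; linarith
  rw [D, div_le_iff₀ (by positivity)]
  calc 1 + Real.log ((a:ℝ)+1) ≤ 3 * ((a:ℝ)+1) ^ ((1:ℝ)/2) := hnum
    _ = 3 * (((a : ℝ) + 1) ^ ((3 : ℝ)/2))⁻¹ * ((a:ℝ)+1) ^ (2:ℝ) := by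
        rw [← Real.rpow_neg h1.le, mul_assoc, ← Real.rpow_add h1]; norm_num

lemma summable_shift {z : ℂ} (hz : 1 < z.re) :
    Summable (fun a : ℕ => 1 / ((a + 1 : ℕ) : ℂ) ^ z) := by
  have := Complex.summable_one_div_nat_cpow.mpr hz
  have h2 := (summable_nat_add_iff 1).mpr this
  simpa using h2

lemma term_norm_le (n : ℕ) (hn : 2 ≤ n) {s : ℂ} (hs : 1 ≤ s.re) (a : ℕ) :
    ‖(1 / ((a + 1 : ℕ) : ℂ) ^ (n : ℂ)) *
      ∑ i ∈ Finset.range (a + 1), 1 / ((i + 1 : ℕ) : ℂ) ^ s‖ ≤ D a := by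
  rw [norm_mul, norm_div, norm_one,
    Complex.norm_natCast_cpow_of_pos (Nat.succ_pos a), Complex.natCast_re]
  have h1 : (1:ℝ) ≤ ((a + 1 : ℕ) : ℝ) := by exact_mod_cast Nat.succ_le_succ a.zero_le
  have hP : ‖∑ i ∈ Finset.range (a + 1), 1 / ((i + 1 : ℕ) : ℂ) ^ s‖
      ≤ 1 + Real.log ((a : ℝ) + 1) := by
    have := Pbound hs (a + 1)
    rwa [show (((a+1 : ℕ)) : ℝ) = (a : ℝ) + 1 by push_cast; ring] at this
  have hpow : ((a + 1 : ℕ) : ℝ) ^ (2 : ℝ) ≤ ((a + 1 : ℕ) : ℝ) ^ (n : ℝ) :=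
    Real.rpow_le_rpow_of_exponent_le h1 (by exact_mod_cast hn)
  have hc : ((a + 1 : ℕ) : ℝ) = (a : ℝ) + 1 := by push_cast; ring
  calc 1 / ((a + 1 : ℕ) : ℝ) ^ (n : ℝ) * ‖∑ i ∈ Finset.range (a + 1), 1 / ((i + 1 : ℕ) : ℂ) ^ s‖
      ≤ 1 / ((a + 1 : ℕ) : ℝ) ^ (2 : ℝ) * (1 + Real.log ((a : ℝ) + 1)) := by
        apply mul_le_mul ?_ hP (norm_nonneg _) (by positivity)
        exact div_le_div_of_nonneg_left one_pos.le (by positivity) hpow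
    _ = D a := by rw [D, hc]; ring

lemma pair_summable (n : ℕ) (hn : 2 ≤ n) {s : ℂ} (hs : 1 < s.re) :
    Summable (fun p : ℕ × ℕ =>
      1 / (((p.1 + 1 : ℕ) : ℂ) ^ (n : ℂ) * ((p.1 + p.2 + 2 : ℕ) : ℂ) ^ s)) := by
  have hBsum : Summable (fun p : ℕ × ℕ =>
      (1 / ((p.1 + 1 : ℕ) : ℝ) ^ (n : ℝ)) * (1 / ((p.2 + 1 : ℕ) : ℝ) ^ s.re)) := by
    refine Summable.mul_of_nonneg (f := fun a : ℕ => 1 / ((a + 1 : ℕ) : ℝ) ^ (n : ℝ))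
      (g := fun b : ℕ => 1 / ((b + 1 : ℕ) : ℝ) ^ s.re) ?_ ?_
      (fun x => by positivity) (fun x => by positivity)
    · have : (1:ℝ) < (n:ℝ) := by exact_mod_cast lt_of_lt_of_le one_lt_two hn
      have h0 := (Real.summable_one_div_nat_rpow (p := (n:ℝ))).mpr this
      have h2 := (summable_nat_add_iff 1).mpr h0
      simpa using h2
    · have h0 := (Real.summable_one_div_nat_rpow (p := s.re)).mpr hs
      have h2 := (summable_nat_add_iff 1).mpr h0
      simpa using h2
  refine Summable.of_norm_bounded hBsum (fun p => ?_)
  rw [norm_div, norm_one, norm_mul,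
    Complex.norm_natCast_cpow_of_pos (by omega : 0 < p.1 + 1),
    Complex.norm_natCast_cpow_of_pos (by omega : 0 < p.1 + p.2 + 2), Complex.natCast_re,
    one_div_mul_one_div]
  apply div_le_div_of_nonneg_left one_pos.le (by positivity)
  apply mul_le_mul_of_nonneg_left ?_ (by positivity)
  apply Real.rpow_le_rpow (by positivity) ?_ (by linarith)
  push_cast
  linarith [Nat.cast_nonneg (α := ℝ) p.1]

lemma g_summable (n : ℕ) (hn : 2 ≤ n) {s : ℂ} (hs : 1 ≤ s.re) :
    Summable (fun a : ℕ => (1 / ((a + 1 : ℕ) : ℂ) ^ (n : ℂ)) *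
        ∑ i ∈ Finset.range (a + 1), 1 / ((i + 1 : ℕ) : ℂ) ^ s) :=
  Summable.of_norm_bounded Dsummable (term_norm_le n hn hs)

lemma zeta2_eq (n : ℕ) (hn : 2 ≤ n) {s : ℂ} (hs : 1 < s.re) :
    zeta2 (n : ℂ) s = riemannZeta s * riemannZeta n -
      ∑' a : ℕ, (1 / ((a + 1 : ℕ) : ℂ) ^ (n : ℂ)) *
        ∑ i ∈ Finset.range (a + 1), 1 / ((i + 1 : ℕ) : ℂ) ^ s := by
  have hfsum := pair_summable n hn hs
  have h2 := g_summable n hn hs.le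
  have hnre : 1 < ((n : ℂ)).re := by
    rw [Complex.natCast_re]; exact_mod_cast lt_of_lt_of_le one_lt_two hn
  have hFs : Summable (fun k : ℕ => 1 / ((k + 1 : ℕ) : ℂ) ^ s) := summable_shift hs
  have hZs : riemannZeta s = ∑' k : ℕ, 1 / ((k + 1 : ℕ) : ℂ) ^ s := by
    rw [zeta_eq_tsum_one_div_nat_add_one_cpow hs]
    exact tsum_congr fun k => by push_cast; ring_nf
  have hZn : riemannZeta (n : ℂ) = ∑' k : ℕ, 1 / ((k + 1 : ℕ) : ℂ) ^ (n : ℂ) := by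
    rw [zeta_eq_tsum_one_div_nat_add_one_cpow hnre]
    exact tsum_congr fun k => by push_cast; ring_nf
  have htail : ∀ a : ℕ, Summable (fun b : ℕ => 1 / ((a + b + 2 : ℕ) : ℂ) ^ s) := by
    intro a
    have := (summable_nat_add_iff (f := fun k : ℕ => 1 / ((k + 1 : ℕ) : ℂ) ^ s) (a + 1)).mpr hFs
    exact this.congr fun b => by norm_num [show b + (a + 1) + 1 = a + b + 2 by omega]
  have hinner : ∀ a : ℕ, Summable (fun b : ℕ =>
      1 / (((a + 1 : ℕ) : ℂ) ^ (n : ℂ) * ((a + b + 2 : ℕ) : ℂ) ^ s)) := by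
    intro a
    have := ((htail a).mul_left (1 / ((a + 1 : ℕ) : ℂ) ^ (n : ℂ)))
    exact this.congr fun b => by rw [one_div_mul_one_div]
  have key : ∀ a : ℕ, (∑' b : ℕ, 1 / (((a + 1 : ℕ) : ℂ) ^ (n : ℂ) * ((a + b + 2 : ℕ) : ℂ) ^ s))
      = (1 / ((a + 1 : ℕ) : ℂ) ^ (n : ℂ)) *
        (riemannZeta s - ∑ i ∈ Finset.range (a + 1), 1 / ((i + 1 : ℕ) : ℂ) ^ s) := by
    intro a
    have e1 : ∀ b : ℕ, 1 / (((a + 1 : ℕ) : ℂ) ^ (n : ℂ) * ((a + b + 2 : ℕ) : ℂ) ^ s)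
        = (1 / ((a + 1 : ℕ) : ℂ) ^ (n : ℂ)) * (1 / ((a + b + 2 : ℕ) : ℂ) ^ s) :=
      fun b => (one_div_mul_one_div _ _).symm
    rw [tsum_congr e1, tsum_mul_left]
    congr 1
    have hadd := Summable.sum_add_tsum_nat_add (f := fun k : ℕ => 1 / ((k + 1 : ℕ) : ℂ) ^ s) (a + 1) hFs
    have e2 : (∑' b : ℕ, 1 / ((b + (a + 1) + 1 : ℕ) : ℂ) ^ s)
        = ∑' b : ℕ, 1 / ((a + b + 2 : ℕ) : ℂ) ^ s :=
      tsum_congr fun b => by rw [show b + (a + 1) + 1 = a + b + 2 by omega]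
    rw [hZs, ← hadd, e2]
    ring
  calc zeta2 (n : ℂ) s
      = ∑' (a : ℕ) (b : ℕ), 1 / (((a + 1 : ℕ) : ℂ) ^ (n : ℂ) * ((a + b + 2 : ℕ) : ℂ) ^ s) := by
        rw [zeta2]; exact Summable.tsum_prod' hfsum hinner
    _ = ∑' a : ℕ, (1 / ((a + 1 : ℕ) : ℂ) ^ (n : ℂ)) *
        (riemannZeta s - ∑ i ∈ Finset.range (a + 1), 1 / ((i + 1 : ℕ) : ℂ) ^ s) :=
        tsum_congr key
    _ = ∑' a : ℕ, ((1 / ((a + 1 : ℕ) : ℂ) ^ (n : ℂ)) * riemannZeta s -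
        (1 / ((a + 1 : ℕ) : ℂ) ^ (n : ℂ)) *
          ∑ i ∈ Finset.range (a + 1), 1 / ((i + 1 : ℕ) : ℂ) ^ s) :=
        tsum_congr fun a => by ring
    _ = (∑' a : ℕ, (1 / ((a + 1 : ℕ) : ℂ) ^ (n : ℂ)) * riemannZeta s) -
        ∑' a : ℕ, (1 / ((a + 1 : ℕ) : ℂ) ^ (n : ℂ)) *
          ∑ i ∈ Finset.range (a + 1), 1 / ((i + 1 : ℕ) : ℂ) ^ s :=
        Summable.tsum_sub ((summable_shift hnre).mul_right _) h2
    _ = riemannZeta s * riemannZeta n - _ := by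
        rw [tsum_mul_right, ← hZn, mul_comm]

end Zeta2Aux

open Zeta2Aux in
/-- For `n ≥ 2`, `lim_{s → 1} (s-1) ζ₂(n, s) = ζ(n)`. -/
theorem tendsto_sub_one_mul_zeta2 (n : ℕ) (hn : 2 ≤ n) :
    Tendsto (fun s : ℂ => (s - 1) * zeta2 (n : ℂ) s)
      (nhdsWithin 1 {s : ℂ | 1 < s.re}) (nhds (riemannZeta n)) := by
  set S : Set ℂ := {s : ℂ | 1 < s.re}
  set g : ℂ → ℂ := fun s => ∑' a : ℕ, (1 / ((a + 1 : ℕ) : ℂ) ^ (n : ℂ)) *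
        ∑ i ∈ Finset.range (a + 1), 1 / ((i + 1 : ℕ) : ℂ) ^ s with hg
  have hSne : S ⊆ {s : ℂ | s ≠ 1} := by
    intro s hs h1
    rw [h1] at hs
    simp only [S, Set.mem_setOf_eq, Complex.one_re] at hs
    exact lt_irrefl 1 hs
  -- part 1 : (s-1) ζ(s) ζ(n) → ζ(n)
  have t1 : Tendsto (fun s : ℂ => (s - 1) * riemannZeta s * riemannZeta n)
      (nhdsWithin 1 S) (nhds (riemannZeta n)) := by
    have := (riemannZeta_residue_one.mono_left (nhdsWithin_mono 1 hSne)).mul_const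
      (riemannZeta (n : ℂ))
    simpa using this
  -- part 2 : (s-1) g s → 0
  have t2 : Tendsto (fun s : ℂ => (s - 1) * g s) (nhdsWithin 1 S) (nhds 0) := by
    have hC : ∀ s ∈ S, ‖g s‖ ≤ ∑' a, D a := by
      intro s hs
      have hs' : (1:ℝ) ≤ s.re := le_of_lt hs
      have hnorm : Summable (fun a : ℕ => ‖(1 / ((a + 1 : ℕ) : ℂ) ^ (n : ℂ)) *
          ∑ i ∈ Finset.range (a + 1), 1 / ((i + 1 : ℕ) : ℂ) ^ s‖) :=
        Summable.of_nonneg_of_le (fun a => norm_nonneg _) (term_norm_le n hn hs') Dsummable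
      refine (norm_tsum_le_tsum_norm hnorm).trans ?_
      exact Summable.tsum_le_tsum (term_norm_le n hn hs') hnorm Dsummable
    have hb : Tendsto (fun s : ℂ => ‖s - 1‖ * ∑' a, D a) (nhdsWithin 1 S) (nhds 0) := by
      have h0 : Tendsto (fun s : ℂ => ‖s - 1‖) (nhdsWithin 1 S) (nhds 0) := by
        have hcont : Continuous fun s : ℂ => ‖s - 1‖ := (continuous_sub_right (1 : ℂ)).norm
        have := (hcont.tendsto 1).mono_left (nhdsWithin_le_nhds (s := S))
        simpa using this
      simpa using h0.mul_const (∑' a, D a)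
    refine squeeze_zero_norm' ?_ hb
    filter_upwards [self_mem_nhdsWithin] with s hs
    rw [norm_mul]
    exact mul_le_mul_of_nonneg_left (hC s hs) (norm_nonneg _)
  have heq : ∀ᶠ s in nhdsWithin 1 S, (s - 1) * riemannZeta s * riemannZeta n - (s - 1) * g s
      = (s - 1) * zeta2 (n : ℂ) s := by
    filter_upwards [self_mem_nhdsWithin] with s hs
    rw [zeta2_eq n hn hs]
    ring
  have := (t1.sub t2).congr' heq
  simpa using this
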